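/- arXiv:1108.0142 — 2 statements merged into one kernel-verified Lean document; each statement's English description precedes it below -/
import Mathlib

section
/- Let f = ∑_{n∈ℕ} 2^{-n} e_{n+1} and g = ∑_{n∈ℕ} 2^{-n} e_n in ℓᵖ(ℕ). Then for every convex φ : (a,b) → [0,∞) with the ranges of f and g contained in (a,b), ∑_n φ(f(n)) = ∑_n φ(g(n)) (possibly both +∞), yet f is not majorized by g and g is not majorized by f. -/
open scoped ENNReal

/-- The standard basis element `e i` of `ℓᵖ(I)`. -/
noncomputable def stdb (p : ℝ≥0∞) {I : Type*} (i : I) : lp (fun _ : I => ℝ) p :=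
  letI := Classical.decEq I
  lp.single p i 1

/-- A bounded linear operator `A : ℓᵖ(J) → ℓᵖ(I)` is positive if `A f ≥ 0` whenever `f ≥ 0`. -/
def IsPositiveOp {I J : Type*} {p : ℝ≥0∞} [Fact (1 ≤ p)]
    (A : lp (fun _ : J => ℝ) p →L[ℝ] lp (fun _ : I => ℝ) p) : Prop :=
  ∀ f : lp (fun _ : J => ℝ) p, (∀ j, 0 ≤ f j) → ∀ i, 0 ≤ A f i

/-- Row stochastic: positive and each row sum `∑_j ⟨A e_j, e_i⟩` equals 1. -/
def IsRowStochastic {I J : Type*} {p : ℝ≥0∞} [Fact (1 ≤ p)]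
    (A : lp (fun _ : J => ℝ) p →L[ℝ] lp (fun _ : I => ℝ) p) : Prop :=
  IsPositiveOp A ∧ ∀ i : I, HasSum (fun j : J => A (stdb p j) i) 1

/-- Column stochastic: positive and each column sum `∑_i ⟨A e_j, e_i⟩` equals 1. -/
def IsColumnStochastic {I J : Type*} {p : ℝ≥0∞} [Fact (1 ≤ p)]
    (A : lp (fun _ : J => ℝ) p →L[ℝ] lp (fun _ : I => ℝ) p) : Prop :=
  IsPositiveOp A ∧ ∀ j : J, HasSum (fun i : I => A (stdb p j) i) 1

/-- Doubly stochastic: both row and column stochastic. -/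
def IsDoublyStochastic {I J : Type*} {p : ℝ≥0∞} [Fact (1 ≤ p)]
    (A : lp (fun _ : J => ℝ) p →L[ℝ] lp (fun _ : I => ℝ) p) : Prop :=
  IsRowStochastic A ∧ IsColumnStochastic A

/-- `f ≺ g` : `f` is majorized by `g`, i.e. `f = D g` for some doubly stochastic `D`. -/
def Majorized {I : Type*} {p : ℝ≥0∞} [Fact (1 ≤ p)]
    (f g : lp (fun _ : I => ℝ) p) : Prop :=
  ∃ D : lp (fun _ : I => ℝ) p →L[ℝ] lp (fun _ : I => ℝ) p,
    IsDoublyStochastic D ∧ f = D g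

/-- `T` preserves majorization if `f ≺ g` implies `T f ≺ T g`. -/
def PreservesMajorization {I : Type*} {p : ℝ≥0∞} [Fact (1 ≤ p)]
    (T : lp (fun _ : I => ℝ) p →L[ℝ] lp (fun _ : I => ℝ) p) : Prop :=
  ∀ f g : lp (fun _ : I => ℝ) p, Majorized f g → Majorized (T f) (T g)

section Aux

variable (p : ℝ≥0∞) [Fact (1 ≤ p)]

lemma stdb_eq (j : ℕ) : stdb p j = lp.single p j 1 := by
  unfold stdb; congr!

lemma stdb_apply (j k : ℕ) : stdb p j k = if k = j then 1 else 0 := by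
  rw [stdb_eq, lp.single_apply]; split <;> simp_all

lemma stdb_nonneg (j k : ℕ) : 0 ≤ stdb p j k := by
  rw [stdb_apply]; split <;> norm_num

/-- Evaluation at a coordinate, as a continuous linear map. -/
noncomputable def lpEval (i : ℕ) : lp (fun _ : ℕ => ℝ) p →L[ℝ] ℝ :=
  LinearMap.mkContinuous
    { toFun := fun x => x i
      map_add' := fun x y => by simp [lp.coeFn_add]
      map_smul' := fun c x => by simp [lp.coeFn_smul] }
    1 (fun x => by
      show ‖x i‖ ≤ 1 * ‖x‖
      rw [one_mul]
      simpa using lp.norm_apply_le_norm (lt_of_lt_of_le one_pos Fact.out).ne' x i)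

lemma hasSum_eval (hp : p ≠ ∞) (D : lp (fun _ : ℕ => ℝ) p →L[ℝ] lp (fun _ : ℕ => ℝ) p)
    (x : lp (fun _ : ℕ => ℝ) p) (i : ℕ) :
    HasSum (fun j => x j * D (stdb p j) i) (D x i) := by
  have h := ((lpEval p i).comp D).hasSum (lp.hasSum_single hp x)
  convert h using 2 with j
  have hx : lp.single p j (x j) = x j • stdb p j := by
    rw [stdb_eq, ← lp.single_smul, smul_eq_mul, mul_one]
  simp [hx, map_smul, lpEval, smul_eq_mul]
  · exact Or.inl rfl
  · rfl

end Aux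

/-- For `f = ∑_n 2^{-n} e_{n+1}` and `g = ∑_n 2^{-n} e_n` in `ℓᵖ(ℕ)` (indices shifted so that
`f 0 = 0`, `f (n+1) = g n = 2^{-(n+1)}`): all convex sums agree, yet `f ⊀ g` and `g ⊀ f`. -/
theorem stmt11 (p : ℝ≥0∞) [Fact (1 ≤ p)] (hp : p ≠ ∞)
    (f g : lp (fun _ : ℕ => ℝ) p)
    (hf : ∀ n : ℕ, f n = if n = 0 then 0 else ((1 : ℝ) / 2) ^ n)
    (hg : ∀ n : ℕ, g n = ((1 : ℝ) / 2) ^ (n + 1)) :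
    (∀ (a b : EReal), a < b → ∀ φ : ℝ → ℝ,
      ConvexOn ℝ {x : ℝ | a < (x : EReal) ∧ (x : EReal) < b} φ →
      (∀ x : ℝ, a < (x : EReal) → (x : EReal) < b → 0 ≤ φ x) →
      (∀ n, a < (f n : EReal) ∧ (f n : EReal) < b) →
      (∀ n, a < (g n : EReal) ∧ (g n : EReal) < b) →
      ∑' n : ℕ, ENNReal.ofReal (φ (f n)) = ∑' n : ℕ, ENNReal.ofReal (φ (g n))) ∧
    ¬ Majorized f g ∧ ¬ Majorized g f := by
  refine ⟨?_, ?_, ?_⟩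
  · -- Part 1: equality of convex sums
    intro a b hab φ hconv hpos hfa hga
    set s : Set ℝ := {x : ℝ | a < (x : EReal) ∧ (x : EReal) < b} with hsdef
    have hsopen : IsOpen s := by
      have hseq : s = (fun x : ℝ => (x : EReal)) ⁻¹' (Set.Ioo a b) := rfl
      rw [hseq]
      exact IsOpen.preimage continuous_coe_real_ereal isOpen_Ioo
    have h0s : (0 : ℝ) ∈ s := by
      have h := hfa 0
      rw [hf 0] at h
      simpa [hsdef] using h
    have hcont : ContinuousAt φ 0 :=
      (hconv.continuousOn hsopen).continuousAt (hsopen.mem_nhds h0s)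
    have hshift : ∀ n : ℕ, ENNReal.ofReal (φ (f (n + 1))) = ENNReal.ofReal (φ (g n)) := by
      intro n; rw [hf (n + 1), hg n]; simp
    rw [tsum_eq_zero_add' ENNReal.summable]
    simp only [hshift, hf 0, if_pos rfl]
    by_cases hS : (∑' n : ℕ, ENNReal.ofReal (φ (g n))) = ⊤
    · rw [hS]; simp
    · have hsummable : Summable fun n : ℕ => φ (g n) := by
        have h1 := ENNReal.summable_toReal hS
        have h2 : ∀ n : ℕ, (ENNReal.ofReal (φ (g n))).toReal = φ (g n) := fun n =>
          ENNReal.toReal_ofReal (hpos _ (hga n).1 (hga n).2)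
        simpa [h2] using h1
      have hlim0 : Filter.Tendsto (fun n : ℕ => φ (g n)) Filter.atTop (nhds 0) :=
        hsummable.tendsto_atTop_zero
      have hgto : Filter.Tendsto (fun n : ℕ => g n) Filter.atTop (nhds 0) := by
        have hbase : Filter.Tendsto (fun n : ℕ => ((1 : ℝ) / 2) ^ n) Filter.atTop (nhds 0) :=
          tendsto_pow_atTop_nhds_zero_of_lt_one (by norm_num) (by norm_num)
        have h3 := hbase.comp (Filter.tendsto_add_atTop_nat 1)
        have h4 : (fun n : ℕ => g n) = (fun n : ℕ => ((1 : ℝ) / 2) ^ n) ∘ (fun n => n + 1) := by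
          funext n; simp [hg n, Function.comp]
        rw [h4]; exact h3
      have hlimφ : Filter.Tendsto (fun n : ℕ => φ (g n)) Filter.atTop (nhds (φ 0)) :=
        hcont.tendsto.comp hgto
      have hφ0 : φ 0 = 0 := tendsto_nhds_unique hlimφ hlim0
      simp [hφ0]
  · -- Part 2: ¬ f ≺ g
    rintro ⟨D, ⟨⟨hposD, hrow⟩, -, hcol⟩, heq⟩
    have hc : ∀ i j : ℕ, 0 ≤ D (stdb p j) i := fun i j =>
      hposD (stdb p j) (fun k => stdb_nonneg p j k) i
    have hexp : HasSum (fun j => g j * D (stdb p j) 0) (f 0) := by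
      rw [heq]; exact hasSum_eval p hp D g 0
    rw [hf 0, if_pos rfl] at hexp
    have hterm : ∀ j, D (stdb p j) 0 = 0 := by
      intro j
      have hgj : (0 : ℝ) < g j := by rw [hg]; positivity
      have hle : g j * D (stdb p j) 0 ≤ 0 :=
        le_hasSum hexp j (fun k _ => mul_nonneg (by rw [hg]; positivity) (hc 0 k))
      have h0 : g j * D (stdb p j) 0 = 0 :=
        le_antisymm hle (mul_nonneg hgj.le (hc 0 j))
      exact (mul_eq_zero.mp h0).resolve_left hgj.ne'
    have h1 := hrow 0
    rw [show (fun j => D (stdb p j) 0) = fun _ => (0 : ℝ) from funext hterm] at h1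
    exact one_ne_zero (h1.unique hasSum_zero)
  · -- Part 3: ¬ g ≺ f
    rintro ⟨D, ⟨⟨hposD, hrow⟩, -, hcol⟩, heq⟩
    set c : ℕ → ℕ → ℝ := fun i j => D (stdb p j) i with hcdef
    have hc : ∀ i j : ℕ, 0 ≤ c i j := fun i j =>
      hposD (stdb p j) (fun k => stdb_nonneg p j k) i
    have hexp : ∀ i, HasSum (fun j => f j * c i j) (g i) := fun i => by
      rw [heq]; exact hasSum_eval p hp D f i
    have main : ∀ n : ℕ, ∀ j, j ≠ n + 1 → c n j = 0 := by
      intro n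
      induction n using Nat.strong_induction_on with
      | _ n IH =>
        have hA : ∀ m, m < n → c m (m + 1) = 1 := by
          intro m hm
          have h2 : HasSum (fun j => c m j) (c m (m + 1)) :=
            hasSum_single (m + 1) (fun j hj => IH m hm j hj)
          exact h2.unique (hrow m)
        have hB : ∀ j, 1 ≤ j → j ≤ n → c n j = 0 := by
          intro j hj1 hjn
          obtain ⟨m, rfl⟩ : ∃ m, j = m + 1 := ⟨j - 1, (Nat.succ_pred_eq_of_pos hj1).symm⟩
          have hm : m < n := by omega
          have hkey := sum_le_hasSum ({m, n} : Finset ℕ) (fun i _ => hc i (m + 1)) (hcol (m + 1))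
          rw [Finset.sum_pair (Nat.ne_of_lt hm), hA m hm] at hkey
          have : c n (m + 1) ≤ 0 := by linarith
          exact le_antisymm this (hc n (m + 1))
        have hF : HasSum (fun j => f j * c n j) (((1 : ℝ) / 2) ^ (n + 1)) := by
          have h := hexp n; rwa [hg n] at h
        have hG : HasSum (fun j => ((1 : ℝ) / 2) ^ (n + 1) * c n j) (((1 : ℝ) / 2) ^ (n + 1)) := by
          simpa using (hrow n).mul_left (((1 : ℝ) / 2) ^ (n + 1))
        have hle : ∀ j, f j * c n j ≤ ((1 : ℝ) / 2) ^ (n + 1) * c n j := by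
          intro j
          rcases Nat.eq_zero_or_pos j with rfl | hj
          · rw [hf]
            simp only [if_pos rfl, if_true, zero_mul]
            exact mul_nonneg (by positivity) (hc n 0)
          · rcases le_or_gt j n with hjn | hjn
            · rw [hB j hj hjn]; simp
            · have hfj : f j = ((1 : ℝ) / 2) ^ j := by
                rw [hf]; simp [Nat.pos_iff_ne_zero.mp hj]
              rw [hfj]
              refine mul_le_mul_of_nonneg_right ?_ (hc n j)
              exact pow_le_pow_of_le_one (by norm_num) (by norm_num) hjn
        have heq' : ∀ j, f j * c n j = ((1 : ℝ) / 2) ^ (n + 1) * c n j := by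
          intro j
          by_contra hne
          exact lt_irrefl _ (hasSum_lt hle (lt_of_le_of_ne (hle j) hne) hF hG)
        intro j hj
        by_contra hne0
        have hfj : f j = ((1 : ℝ) / 2) ^ (n + 1) := mul_right_cancel₀ hne0 (heq' j)
        rcases Nat.eq_zero_or_pos j with rfl | hjpos
        · have hppos : (0 : ℝ) < ((1 : ℝ) / 2) ^ (n + 1) := by positivity
          rw [hf] at hfj
          simp only [if_pos rfl, if_true] at hfj
          linarith
        · rw [hf, if_neg (Nat.pos_iff_ne_zero.mp hjpos)] at hfj
          have hinj : j = n + 1 := by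
            rcases lt_trichotomy j (n + 1) with h | h | h
            · have := pow_lt_pow_right_of_lt_one₀ (a := (1 : ℝ) / 2) (by norm_num) (by norm_num) h
              linarith
            · exact h
            · have := pow_lt_pow_right_of_lt_one₀ (a := (1 : ℝ) / 2) (by norm_num) (by norm_num) h
              linarith
          exact hj hinj
    have hcol0 := hcol 0
    have hz : ∀ i, c i 0 = 0 := fun i => main i 0 (by omega)
    rw [show (fun i => c i 0) = fun _ => (0 : ℝ) from funext hz] at hcol0
    exact one_ne_zero (hcol0.unique hasSum_zero)
end

section
/- Let D be a doubly stochastic operator on ℓᵖ(I) and let Σ be a family of injections σ : I → I whose ranges are pairwise disjoint. Then there exists a doubly stochastic operator D̃ on ℓᵖ(I) such that P_σ ∘ D = D̃ ∘ P_σ for every σ ∈ Σ, where P_σ is the isometry P_σ(∑_j f_j e_j) = ∑_j f_j e_{σ(j)}. -/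
open scoped ENNReal

section
variable {I : Type*} {p : ℝ≥0∞} [Fact (1 ≤ p)]

lemma hq_pos (hp : p ≠ ∞) : 0 < p.toReal :=
  ENNReal.toReal_pos (by have := Fact.out (p := 1 ≤ p); intro h; simp [h] at this) hp

lemma pull_mem (hp : p ≠ ∞) {σ : I → I} (hσ : Function.Injective σ)
    (f : lp (fun _ : I => ℝ) p) : Memℓp (fun j => f (σ j)) p := by
  apply memℓp_gen
  exact ((lp.hasSum_norm (hq_pos hp) f).summable).comp_injective hσ

noncomputable def pull (hp : p ≠ ∞) {σ : I → I} (hσ : Function.Injective σ)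
    (f : lp (fun _ : I => ℝ) p) : lp (fun _ : I => ℝ) p :=
  ⟨fun j => f (σ j), pull_mem hp hσ f⟩

@[simp] lemma pull_apply (hp : p ≠ ∞) {σ : I → I} (hσ : Function.Injective σ)
    (f : lp (fun _ : I => ℝ) p) (j : I) : pull hp hσ f j = f (σ j) := rfl

lemma pull_add (hp : p ≠ ∞) {σ : I → I} (hσ : Function.Injective σ)
    (f g : lp (fun _ : I => ℝ) p) :
    pull hp hσ (f + g) = pull hp hσ f + pull hp hσ g := by
  ext j; simp [lp.coeFn_add, Pi.add_apply]

lemma pull_smul (hp : p ≠ ∞) {σ : I → I} (hσ : Function.Injective σ)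
    (c : ℝ) (f : lp (fun _ : I => ℝ) p) :
    pull hp hσ (c • f) = c • pull hp hσ f := by
  ext j; simp [lp.coeFn_smul, Pi.smul_apply]

end
section
variable {I : Type*} {p : ℝ≥0∞} [Fact (1 ≤ p)]
  {S : Set (I → I)} (D : lp (fun _ : I => ℝ) p →L[ℝ] lp (fun _ : I => ℝ) p)

noncomputable def Dtilfun (hp : p ≠ ∞) (hinj : ∀ σ ∈ S, Function.Injective σ)
    (f : lp (fun _ : I => ℝ) p) : I → ℝ := fun i =>
  letI := Classical.dec
  if h : ∃ σ ∈ S, ∃ j, σ j = i then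
    D (pull hp (hinj h.choose h.choose_spec.1) f) h.choose_spec.2.choose
  else f i

lemma pull_congr (hp : p ≠ ∞) {σ₁ σ₂ : I → I} (h₁ : Function.Injective σ₁)
    (h₂ : Function.Injective σ₂) (hσ : σ₁ = σ₂) (f : lp (fun _ : I => ℝ) p) :
    pull hp h₁ f = pull hp h₂ f := by subst hσ; rfl

lemma Dtilfun_apply_of_not_mem (hp : p ≠ ∞) (hinj : ∀ σ ∈ S, Function.Injective σ)
    (f : lp (fun _ : I => ℝ) p) {i : I} (h : ¬ ∃ σ ∈ S, ∃ j, σ j = i) :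
    Dtilfun D hp hinj f i = f i := dif_neg h

lemma Dtilfun_apply_of_mem (hp : p ≠ ∞) (hinj : ∀ σ ∈ S, Function.Injective σ)
    (hdisj : ∀ σ₁ ∈ S, ∀ σ₂ ∈ S, σ₁ ≠ σ₂ → Disjoint (Set.range σ₁) (Set.range σ₂))
    (f : lp (fun _ : I => ℝ) p) {σ : I → I} (hσ : σ ∈ S) (j : I) :
    Dtilfun D hp hinj f (σ j) = D (pull hp (hinj σ hσ) f) j := by
  have h : ∃ τ ∈ S, ∃ k, τ k = σ j := ⟨σ, hσ, j, rfl⟩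
  rw [Dtilfun, dif_pos h]
  have hτ : h.choose ∈ S := h.choose_spec.1
  have hk : h.choose h.choose_spec.2.choose = σ j := h.choose_spec.2.choose_spec
  have hτσ : h.choose = σ := by
    by_contra hne
    exact (Set.disjoint_left.1 (hdisj _ hτ _ hσ hne)) ⟨_, hk⟩ ⟨j, rfl⟩
  have hkj : h.choose_spec.2.choose = j :=
    hinj σ hσ (((congrFun hτσ h.choose_spec.2.choose).symm).trans hk)
  rw [hkj, pull_congr hp (hinj _ hτ) (hinj σ hσ) hτσ f]

end
section
variable {I : Type*} {p : ℝ≥0∞} [Fact (1 ≤ p)]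
  {S : Set (I → I)} (D : lp (fun _ : I => ℝ) p →L[ℝ] lp (fun _ : I => ℝ) p)

lemma Dtilfun_summable_and_bound (hp : p ≠ ∞) (hinj : ∀ σ ∈ S, Function.Injective σ)
    (hdisj : ∀ σ₁ ∈ S, ∀ σ₂ ∈ S, σ₁ ≠ σ₂ → Disjoint (Set.range σ₁) (Set.range σ₂))
    (f : lp (fun _ : I => ℝ) p) :
    Summable (fun i => ‖Dtilfun D hp hinj f i‖ ^ p.toReal) ∧
      ∑' i, ‖Dtilfun D hp hinj f i‖ ^ p.toReal ≤
        (‖D‖ ^ p.toReal + 1) * ‖f‖ ^ p.toReal := by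
  classical
  set q := p.toReal with hqdef
  have hq : 0 < q := hq_pos hp
  set A : Set I := {i | ∃ σ ∈ S, ∃ j, σ j = i} with hA
  -- the big product family
  set G : ↥S × I → ℝ := fun x => ‖D (pull hp (hinj x.1.1 x.1.2) f) x.2‖ ^ q with hG
  have Gnn : ∀ x, 0 ≤ G x := fun x => Real.rpow_nonneg (norm_nonneg _) _
  have Gcol : ∀ σ : ↥S, Summable fun j => G (σ, j) :=
    fun σ => (lp.hasSum_norm hq (D (pull hp (hinj σ.1 σ.2) f))).summable
  have Gcolsum : ∀ σ : ↥S, ∑' j, G (σ, j) = ‖D (pull hp (hinj σ.1 σ.2) f)‖ ^ q :=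
    fun σ => (lp.hasSum_norm hq (D (pull hp (hinj σ.1 σ.2) f))).tsum_eq
  -- the pullback norms
  set e : ↥S × I → I := fun x => x.1.1 x.2 with he
  have einj : Function.Injective e := by
    rintro ⟨⟨σ₁, hσ₁⟩, j₁⟩ ⟨⟨σ₂, hσ₂⟩, j₂⟩ hx
    simp only [he] at hx
    have hσ : σ₁ = σ₂ := by
      by_contra hne
      exact (Set.disjoint_left.1 (hdisj _ hσ₁ _ hσ₂ (by simpa using hne)))
        ⟨j₁, rfl⟩ ⟨j₂, hx.symm⟩
    subst hσ
    have := hinj _ hσ₁ hx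
    simp [this]
  set W : ↥S × I → ℝ := fun x => ‖f (e x)‖ ^ q with hW
  have Wnn : ∀ x, 0 ≤ W x := fun x => Real.rpow_nonneg (norm_nonneg _) _
  have Wsummable : Summable W :=
    ((lp.hasSum_norm hq f).summable).comp_injective einj
  have Wtsum_le : ∑' x, W x ≤ ‖f‖ ^ q := by
    rw [lp.norm_rpow_eq_tsum hq f]
    exact Summable.tsum_le_tsum_of_inj e einj
      (fun i _ => Real.rpow_nonneg (norm_nonneg _) _) (fun x => le_rfl)
      Wsummable ((lp.hasSum_norm hq f).summable)
  have Wcol : ∀ σ : ↥S, Summable fun j => W (σ, j) :=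
    fun σ => (lp.hasSum_norm hq (pull hp (hinj σ.1 σ.2) f)).summable
  have Wcolsum : ∀ σ : ↥S, ∑' j, W (σ, j) = ‖pull hp (hinj σ.1 σ.2) f‖ ^ q :=
    fun σ => (lp.hasSum_norm hq (pull hp (hinj σ.1 σ.2) f)).tsum_eq
  have Pnsummable : Summable fun σ : ↥S => ‖pull hp (hinj σ.1 σ.2) f‖ ^ q := by
    have := ((summable_prod_of_nonneg (fun x => Wnn x)).1 Wsummable).2
    refine this.congr fun σ => Wcolsum σ
  have Pnsum_le : ∑' σ : ↥S, ‖pull hp (hinj σ.1 σ.2) f‖ ^ q ≤ ‖f‖ ^ q := by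
    calc ∑' σ : ↥S, ‖pull hp (hinj σ.1 σ.2) f‖ ^ q
        = ∑' σ : ↥S, ∑' j, W (σ, j) := by
          exact tsum_congr fun σ => (Wcolsum σ).symm
      _ = ∑' x, W x := (Summable.tsum_prod' Wsummable Wcol).symm
      _ ≤ ‖f‖ ^ q := Wtsum_le
  -- bound on column sums of G
  have Dbound : ∀ σ : ↥S, ‖D (pull hp (hinj σ.1 σ.2) f)‖ ^ q ≤
      ‖D‖ ^ q * ‖pull hp (hinj σ.1 σ.2) f‖ ^ q := by
    intro σ
    rw [← Real.mul_rpow (norm_nonneg D) (norm_nonneg _)]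
    exact Real.rpow_le_rpow (norm_nonneg _) (D.le_opNorm _) hq.le
  have Growsummable : Summable fun σ : ↥S => ∑' j, G (σ, j) := by
    refine Summable.of_nonneg_of_le (fun σ => tsum_nonneg fun j => Gnn _) ?_
      (Pnsummable.mul_left (‖D‖ ^ q))
    intro σ
    rw [Gcolsum σ]
    exact Dbound σ
  have Gsummable : Summable G :=
    (summable_prod_of_nonneg (fun x => Gnn x)).2 ⟨Gcol, Growsummable⟩
  have Gtsum_le : ∑' x, G x ≤ ‖D‖ ^ q * ‖f‖ ^ q := by
    calc ∑' x, G x = ∑' σ : ↥S, ∑' j, G (σ, j) := Summable.tsum_prod' Gsummable Gcol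
      _ ≤ ∑' σ : ↥S, ‖D‖ ^ q * ‖pull hp (hinj σ.1 σ.2) f‖ ^ q := by
          refine Summable.tsum_le_tsum ?_ Growsummable (Pnsummable.mul_left _)
          intro σ; rw [Gcolsum σ]; exact Dbound σ
      _ = ‖D‖ ^ q * ∑' σ : ↥S, ‖pull hp (hinj σ.1 σ.2) f‖ ^ q := tsum_mul_left
      _ ≤ ‖D‖ ^ q * ‖f‖ ^ q := by
          exact mul_le_mul_of_nonneg_left Pnsum_le (Real.rpow_nonneg (norm_nonneg _) _)
  -- the map from A into the product
  have hmem : ∀ i : ↥A, ∃ σ ∈ S, ∃ j, σ j = i.1 := fun i => i.2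
  set ψ : ↥A → ↥S × I := fun i =>
    (⟨(hmem i).choose, (hmem i).choose_spec.1⟩, (hmem i).choose_spec.2.choose) with hψdef
  have hψ : ∀ i : ↥A, e (ψ i) = i.1 := fun i => (hmem i).choose_spec.2.choose_spec
  have ψinj : Function.Injective ψ := by
    intro i₁ i₂ h12
    have : e (ψ i₁) = e (ψ i₂) := by rw [h12]
    rw [hψ i₁, hψ i₂] at this
    exact Subtype.ext this
  have hDG : ∀ i : ↥A, ‖Dtilfun D hp hinj f i.1‖ ^ q = G (ψ i) := by
    intro i
    have h : ∃ σ ∈ S, ∃ j, σ j = i.1 := i.2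
    rw [Dtilfun, dif_pos h]
  have sA : Summable fun i : ↥A => ‖Dtilfun D hp hinj f i.1‖ ^ q := by
    refine (Gsummable.comp_injective ψinj).congr fun i => ?_
    exact (hDG i).symm
  have tA : ∑' i : ↥A, ‖Dtilfun D hp hinj f i.1‖ ^ q ≤ ‖D‖ ^ q * ‖f‖ ^ q := by
    refine le_trans (Summable.tsum_le_tsum_of_inj ψ ψinj (fun x _ => Gnn x)
      (fun i => le_of_eq (hDG i)) sA Gsummable) Gtsum_le
  -- the complement
  have hAc : ∀ i : ↥(Aᶜ), Dtilfun D hp hinj f i.1 = f i.1 := by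
    intro i
    exact Dtilfun_apply_of_not_mem D hp hinj f i.2
  have sAc : Summable fun i : ↥(Aᶜ) => ‖Dtilfun D hp hinj f i.1‖ ^ q := by
    refine (((lp.hasSum_norm hq f).summable).subtype Aᶜ).congr fun i => ?_
    rw [Function.comp_apply, hAc i]
  have tAc : ∑' i : ↥(Aᶜ), ‖Dtilfun D hp hinj f i.1‖ ^ q ≤ ‖f‖ ^ q := by
    rw [lp.norm_rpow_eq_tsum hq f]
    refine le_trans (le_of_eq (tsum_congr fun i => by rw [hAc i])) ?_
    exact Summable.tsum_subtype_le (fun i => ‖f i‖ ^ q) Aᶜ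
      (fun i => Real.rpow_nonneg (norm_nonneg _) _) ((lp.hasSum_norm hq f).summable)
  have hsum : Summable fun i => ‖Dtilfun D hp hinj f i‖ ^ q :=
    summable_subtype_and_compl.1 ⟨sA, sAc⟩
  refine ⟨hsum, ?_⟩
  rw [← Summable.tsum_subtype_add_tsum_subtype_compl hsum A]
  calc (∑' i : ↥A, ‖Dtilfun D hp hinj f i.1‖ ^ q)
        + ∑' i : ↥(Aᶜ), ‖Dtilfun D hp hinj f i.1‖ ^ q
      ≤ ‖D‖ ^ q * ‖f‖ ^ q + ‖f‖ ^ q := add_le_add tA tAc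
    _ = (‖D‖ ^ q + 1) * ‖f‖ ^ q := by ring

end
section
variable {I : Type*} {p : ℝ≥0∞} [Fact (1 ≤ p)]
  {S : Set (I → I)} (D : lp (fun _ : I => ℝ) p →L[ℝ] lp (fun _ : I => ℝ) p)

lemma Dtilfun_add (hp : p ≠ ∞) (hinj : ∀ σ ∈ S, Function.Injective σ)
    (f g : lp (fun _ : I => ℝ) p) (i : I) :
    Dtilfun D hp hinj (f + g) i = Dtilfun D hp hinj f i + Dtilfun D hp hinj g i := by
  classical
  by_cases h : ∃ σ ∈ S, ∃ j, σ j = i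
  · rw [Dtilfun, Dtilfun, Dtilfun, dif_pos h, dif_pos h, dif_pos h, pull_add, map_add,
      lp.coeFn_add, Pi.add_apply]
  · rw [Dtilfun_apply_of_not_mem D hp hinj _ h, Dtilfun_apply_of_not_mem D hp hinj _ h,
      Dtilfun_apply_of_not_mem D hp hinj _ h, lp.coeFn_add, Pi.add_apply]

lemma Dtilfun_smul (hp : p ≠ ∞) (hinj : ∀ σ ∈ S, Function.Injective σ)
    (c : ℝ) (f : lp (fun _ : I => ℝ) p) (i : I) :
    Dtilfun D hp hinj (c • f) i = c • Dtilfun D hp hinj f i := by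
  classical
  by_cases h : ∃ σ ∈ S, ∃ j, σ j = i
  · rw [Dtilfun, Dtilfun, dif_pos h, dif_pos h, pull_smul, map_smul,
      lp.coeFn_smul, Pi.smul_apply]
  · rw [Dtilfun_apply_of_not_mem D hp hinj _ h, Dtilfun_apply_of_not_mem D hp hinj _ h,
      lp.coeFn_smul, Pi.smul_apply]

noncomputable def DtilLin (hp : p ≠ ∞) (hinj : ∀ σ ∈ S, Function.Injective σ)
    (hdisj : ∀ σ₁ ∈ S, ∀ σ₂ ∈ S, σ₁ ≠ σ₂ → Disjoint (Set.range σ₁) (Set.range σ₂)) :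
    lp (fun _ : I => ℝ) p →ₗ[ℝ] lp (fun _ : I => ℝ) p where
  toFun f := ⟨Dtilfun D hp hinj f,
    memℓp_gen (Dtilfun_summable_and_bound D hp hinj hdisj f).1⟩
  map_add' f g := by
    ext i
    simp only [lp.coeFn_add, Pi.add_apply]
    exact Dtilfun_add D hp hinj f g i
  map_smul' c f := by
    ext i
    simp only [lp.coeFn_smul, Pi.smul_apply, RingHom.id_apply]
    exact Dtilfun_smul D hp hinj c f i

noncomputable def Dtil (hp : p ≠ ∞) (hinj : ∀ σ ∈ S, Function.Injective σ)
    (hdisj : ∀ σ₁ ∈ S, ∀ σ₂ ∈ S, σ₁ ≠ σ₂ → Disjoint (Set.range σ₁) (Set.range σ₂)) :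
    lp (fun _ : I => ℝ) p →L[ℝ] lp (fun _ : I => ℝ) p := by
  refine LinearMap.mkContinuous (DtilLin D hp hinj hdisj)
    ((‖D‖ ^ p.toReal + 1) ^ (1 / p.toReal)) (fun f => ?_)
  have hq : 0 < p.toReal := hq_pos hp
  have hKnn : (0:ℝ) ≤ (‖D‖ ^ p.toReal + 1) ^ (1 / p.toReal) := Real.rpow_nonneg
    (by positivity) _
  refine lp.norm_le_of_tsum_le hq (by positivity) ?_
  have hpow : (((‖D‖ ^ p.toReal + 1) ^ (1 / p.toReal)) * ‖f‖) ^ p.toReal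
      = (‖D‖ ^ p.toReal + 1) * ‖f‖ ^ p.toReal := by
    rw [Real.mul_rpow hKnn (norm_nonneg f),
      ← Real.rpow_mul (by positivity), one_div, inv_mul_cancel₀ hq.ne', Real.rpow_one]
  rw [hpow]
  exact (Dtilfun_summable_and_bound D hp hinj hdisj f).2

@[simp] lemma Dtil_apply (hp : p ≠ ∞) (hinj : ∀ σ ∈ S, Function.Injective σ)
    (hdisj : ∀ σ₁ ∈ S, ∀ σ₂ ∈ S, σ₁ ≠ σ₂ → Disjoint (Set.range σ₁) (Set.range σ₂))
    (f : lp (fun _ : I => ℝ) p) (i : I) :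
    Dtil D hp hinj hdisj f i = Dtilfun D hp hinj f i := rfl

end
section
variable {I : Type*} {p : ℝ≥0∞} [Fact (1 ≤ p)]

lemma hp0 : p ≠ 0 := by
  have := Fact.out (p := 1 ≤ p); intro h; simp [h] at this

lemma stdb_apply_self (i : I) : (stdb p i : ∀ _ : I, ℝ) i = 1 := by
  letI := Classical.decEq I
  rw [stdb]; exact lp.single_apply_self p i 1

lemma stdb_apply_ne {i j : I} (h : j ≠ i) : (stdb p i : ∀ _ : I, ℝ) j = 0 := by
  letI := Classical.decEq I
  rw [stdb]; exact lp.single_apply_ne p i 1 h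

/-- evaluation at a coordinate, as a continuous linear map -/
noncomputable def evalCLM (i : I) : lp (fun _ : I => ℝ) p →L[ℝ] ℝ :=
  LinearMap.mkContinuous
    { toFun := fun f => f i
      map_add' := fun f g => by simp [lp.coeFn_add]
      map_smul' := fun c f => by simp [lp.coeFn_smul] }
    1 (fun f => by rw [one_mul]; exact lp.norm_apply_le_norm hp0 f i)

lemma hasSum_apply {α : Type*} {g : α → lp (fun _ : I => ℝ) p}
    {f : lp (fun _ : I => ℝ) p} (h : HasSum g f) (i : I) :
    HasSum (fun a => g a i) (f i) :=
  (evalCLM (p := p) i).hasSum h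

lemma single_eq_smul_stdb [DecidableEq I] (j : I) (c : ℝ) :
    lp.single p j c = c • stdb p j := by
  ext k
  rcases eq_or_ne k j with rfl | hk
  · rw [lp.single_apply_self, lp.coeFn_smul, Pi.smul_apply, stdb_apply_self]
    simp
  · rw [lp.single_apply_ne p j _ hk, lp.coeFn_smul, Pi.smul_apply, stdb_apply_ne hk]
    simp

lemma hasSum_smul_stdb (hp : p ≠ ∞) (g : lp (fun _ : I => ℝ) p) :
    HasSum (fun j => g j • stdb p j) g := by
  classical
  exact (lp.hasSum_single hp g).congr_fun fun j => (single_eq_smul_stdb j (g j)).symm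

end
section
variable {I : Type*} {p : ℝ≥0∞} [Fact (1 ≤ p)]

lemma pull_stdb_mem (hp : p ≠ ∞) {σ : I → I} (hσ : Function.Injective σ) (j₀ : I) :
    pull hp hσ (stdb p (σ j₀)) = stdb p j₀ := by
  ext j
  rw [pull_apply]
  rcases eq_or_ne j j₀ with rfl | hj
  · rw [stdb_apply_self, stdb_apply_self]
  · rw [stdb_apply_ne (fun h => hj (hσ h)), stdb_apply_ne hj]

lemma pull_stdb_not_mem (hp : p ≠ ∞) {σ : I → I} (hσ : Function.Injective σ) {j' : I}
    (h : j' ∉ Set.range σ) : pull hp hσ (stdb p j') = 0 := by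
  ext j
  rw [pull_apply, stdb_apply_ne (fun hc => h ⟨j, hc⟩), lp.coeFn_zero, Pi.zero_apply]

lemma P_coord (hp : p ≠ ∞) {σ : I → I} (hσ : Function.Injective σ)
    (Pσ : lp (fun _ : I => ℝ) p →L[ℝ] lp (fun _ : I => ℝ) p)
    (hPσ : ∀ j, Pσ (stdb p j) = stdb p (σ j)) (g : lp (fun _ : I => ℝ) p) :
    (∀ j, Pσ g (σ j) = g j) ∧ ∀ i, i ∉ Set.range σ → Pσ g i = 0 := by
  classical
  have h1 : HasSum (fun j => g j • stdb p (σ j)) (Pσ g) := by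
    refine (Pσ.hasSum (hasSum_smul_stdb hp g)).congr_fun fun j => ?_
    rw [map_smul, hPσ]
  constructor
  · intro j₀
    have h2 := hasSum_apply h1 (σ j₀)
    have h3 : HasSum (fun j => if j = j₀ then g j₀ else (0:ℝ)) (Pσ g (σ j₀)) := by
      refine h2.congr_fun fun j => ?_
      rcases eq_or_ne j j₀ with rfl | hj
      · rw [if_pos rfl, lp.coeFn_smul, Pi.smul_apply, stdb_apply_self, smul_eq_mul, mul_one]
      · rw [if_neg hj, lp.coeFn_smul, Pi.smul_apply,
          stdb_apply_ne (fun h => hj (hσ h).symm), smul_zero]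
    exact (h3.unique (hasSum_ite_eq j₀ (g j₀)))
  · intro i hi
    have h2 := hasSum_apply h1 i
    have h3 : HasSum (fun _ : I => (0:ℝ)) (Pσ g i) := by
      refine h2.congr_fun fun j => ?_
      rw [lp.coeFn_smul, Pi.smul_apply, stdb_apply_ne (fun hc => hi ⟨j, hc.symm⟩), smul_zero]
    exact (h3.unique hasSum_zero)

end
section
variable {I : Type*} {p : ℝ≥0∞} [Fact (1 ≤ p)]
  {S : Set (I → I)} (D : lp (fun _ : I => ℝ) p →L[ℝ] lp (fun _ : I => ℝ) p)

lemma Dtil_pos (hp : p ≠ ∞) (hinj : ∀ σ ∈ S, Function.Injective σ)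
    (hdisj : ∀ σ₁ ∈ S, ∀ σ₂ ∈ S, σ₁ ≠ σ₂ → Disjoint (Set.range σ₁) (Set.range σ₂))
    (hD : IsPositiveOp D) : IsPositiveOp (Dtil D hp hinj hdisj) := by
  intro f hf i
  rw [Dtil_apply, Dtilfun]
  split
  · next h =>
      exact hD (pull hp (hinj h.choose h.choose_spec.1) f)
        (fun j => hf (h.choose j)) h.choose_spec.2.choose
  · exact hf i

lemma Dtil_row (hp : p ≠ ∞) (hinj : ∀ σ ∈ S, Function.Injective σ)
    (hdisj : ∀ σ₁ ∈ S, ∀ σ₂ ∈ S, σ₁ ≠ σ₂ → Disjoint (Set.range σ₁) (Set.range σ₂))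
    (hrow : ∀ i, HasSum (fun j => D (stdb p j) i) 1) (i : I) :
    HasSum (fun j => Dtil D hp hinj hdisj (stdb p j) i) 1 := by
  classical
  by_cases hi : ∃ σ ∈ S, ∃ i₀, σ i₀ = i
  · obtain ⟨σ, hσ, i₀, rfl⟩ := hi
    have hσi := hinj σ hσ
    refine (hσi.hasSum_iff ?_).1 ?_
    · intro j hj
      rw [Dtil_apply, Dtilfun_apply_of_mem D hp hinj hdisj _ hσ i₀,
        pull_stdb_not_mem hp hσi hj, map_zero, lp.coeFn_zero, Pi.zero_apply]
    · refine (hrow i₀).congr_fun fun j => ?_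
      show Dtil D hp hinj hdisj (stdb p (σ j)) (σ i₀) = _
      rw [Dtil_apply, Dtilfun_apply_of_mem D hp hinj hdisj _ hσ i₀, pull_stdb_mem hp hσi j]
  · refine (hasSum_ite_eq i (1:ℝ)).congr_fun fun j => ?_
    rw [Dtil_apply, Dtilfun_apply_of_not_mem D hp hinj _ hi]
    rcases eq_or_ne j i with rfl | hj
    · rw [if_pos rfl, stdb_apply_self]
    · rw [if_neg hj, stdb_apply_ne (fun h => hj h.symm)]

lemma Dtil_col (hp : p ≠ ∞) (hinj : ∀ σ ∈ S, Function.Injective σ)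
    (hdisj : ∀ σ₁ ∈ S, ∀ σ₂ ∈ S, σ₁ ≠ σ₂ → Disjoint (Set.range σ₁) (Set.range σ₂))
    (hcol : ∀ j, HasSum (fun i => D (stdb p j) i) 1) (j : I) :
    HasSum (fun i => Dtil D hp hinj hdisj (stdb p j) i) 1 := by
  classical
  by_cases hj : ∃ σ ∈ S, ∃ j₀, σ j₀ = j
  · obtain ⟨σ, hσ, j₀, rfl⟩ := hj
    have hσi := hinj σ hσ
    refine (hσi.hasSum_iff ?_).1 ?_
    · intro i hi
      by_cases hiA : ∃ τ ∈ S, ∃ i₀, τ i₀ = i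
      · obtain ⟨τ, hτ, i₀, rfl⟩ := hiA
        have hτσ : τ ≠ σ := fun h => hi ⟨i₀, by rw [← h]⟩
        have hns : σ j₀ ∉ Set.range τ := fun hc =>
          (Set.disjoint_left.1 (hdisj _ hτ _ hσ hτσ)) hc ⟨j₀, rfl⟩
        rw [Dtil_apply, Dtilfun_apply_of_mem D hp hinj hdisj _ hτ i₀,
          pull_stdb_not_mem hp (hinj τ hτ) hns, map_zero, lp.coeFn_zero, Pi.zero_apply]
      · rw [Dtil_apply, Dtilfun_apply_of_not_mem D hp hinj _ hiA,
          stdb_apply_ne (fun h => hiA ⟨σ, hσ, j₀, h.symm⟩)]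
    · refine (hcol j₀).congr_fun fun i₀ => ?_
      show Dtil D hp hinj hdisj (stdb p (σ j₀)) (σ i₀) = _
      rw [Dtil_apply, Dtilfun_apply_of_mem D hp hinj hdisj _ hσ i₀, pull_stdb_mem hp hσi j₀]
  · refine (hasSum_ite_eq j (1:ℝ)).congr_fun fun i => ?_
    by_cases hiA : ∃ τ ∈ S, ∃ i₀, τ i₀ = i
    · obtain ⟨τ, hτ, i₀, rfl⟩ := hiA
      have hns : j ∉ Set.range τ := fun ⟨k, hk⟩ => hj ⟨τ, hτ, k, hk⟩
      rw [Dtil_apply, Dtilfun_apply_of_mem D hp hinj hdisj _ hτ i₀,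
        pull_stdb_not_mem hp (hinj τ hτ) hns, map_zero, lp.coeFn_zero, Pi.zero_apply,
        if_neg (fun h => hj ⟨τ, hτ, i₀, h⟩)]
    · rw [Dtil_apply, Dtilfun_apply_of_not_mem D hp hinj _ hiA]
      rcases eq_or_ne i j with rfl | hij
      · rw [if_pos rfl, stdb_apply_self]
      · rw [if_neg hij, stdb_apply_ne hij]

end
/-- Given a doubly stochastic `D` on `ℓᵖ(I)` and a family `S` of injections `I → I` with
pairwise disjoint ranges (with `P σ` the operator `e_j ↦ e_{σ j}`), there is a doubly
stochastic `D̃` with `P_σ ∘ D = D̃ ∘ P_σ` for all `σ ∈ S`. -/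
theorem stmt13 {I : Type*} [Nonempty I] (p : ℝ≥0∞) [Fact (1 ≤ p)] (hp : p ≠ ∞)
    (D : lp (fun _ : I => ℝ) p →L[ℝ] lp (fun _ : I => ℝ) p) (hD : IsDoublyStochastic D)
    (S : Set (I → I)) (hinj : ∀ σ ∈ S, Function.Injective σ)
    (hdisj : ∀ σ₁ ∈ S, ∀ σ₂ ∈ S, σ₁ ≠ σ₂ → Disjoint (Set.range σ₁) (Set.range σ₂))
    (P : (I → I) → lp (fun _ : I => ℝ) p →L[ℝ] lp (fun _ : I => ℝ) p)
    (hP : ∀ σ ∈ S, ∀ j : I, P σ (stdb p j) = stdb p (σ j)) :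
    ∃ D' : lp (fun _ : I => ℝ) p →L[ℝ] lp (fun _ : I => ℝ) p,
      IsDoublyStochastic D' ∧ ∀ σ ∈ S, (P σ).comp D = D'.comp (P σ) := by
  classical
  refine ⟨Dtil D hp hinj hdisj,
    ⟨⟨Dtil_pos D hp hinj hdisj hD.1.1, Dtil_row D hp hinj hdisj hD.1.2⟩,
     ⟨Dtil_pos D hp hinj hdisj hD.1.1, Dtil_col D hp hinj hdisj hD.2.2⟩⟩, ?_⟩
  intro σ hσ
  have hσi := hinj σ hσ
  have hPc := fun g => P_coord hp hσi (P σ) (hP σ hσ) g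
  ext f i
  show (P σ) (D f) i = Dtil D hp hinj hdisj ((P σ) f) i
  by_cases hi : ∃ τ ∈ S, ∃ i₀, τ i₀ = i
  · obtain ⟨τ, hτ, i₀, rfl⟩ := hi
    rw [Dtil_apply, Dtilfun_apply_of_mem D hp hinj hdisj _ hτ i₀]
    rcases eq_or_ne τ σ with rfl | hτσ
    · have hpull : pull hp (hinj τ hτ) ((P τ) f) = f := by
        ext j
        rw [pull_apply]
        exact (hPc f).1 j
      rw [hpull, (hPc (D f)).1 i₀]
    · have hpull : pull hp (hinj τ hτ) ((P σ) f) = 0 := by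
        ext j
        rw [pull_apply, lp.coeFn_zero, Pi.zero_apply]
        refine (hPc f).2 (τ j) fun hc => ?_
        exact (Set.disjoint_left.1 (hdisj _ hτ _ hσ hτσ)) ⟨j, rfl⟩ hc
      rw [hpull, map_zero, lp.coeFn_zero, Pi.zero_apply]
      refine (hPc (D f)).2 (τ i₀) fun hc => ?_
      exact (Set.disjoint_left.1 (hdisj _ hτ _ hσ hτσ)) ⟨i₀, rfl⟩ hc
  · rw [Dtil_apply, Dtilfun_apply_of_not_mem D hp hinj _ hi,
      (hPc (D f)).2 i (fun ⟨k, hk⟩ => hi ⟨σ, hσ, k, hk⟩),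
      (hPc f).2 i (fun ⟨k, hk⟩ => hi ⟨σ, hσ, k, hk⟩)]
end
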